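/- If 1 ≤ p < 2 and G is a graph of order n, then ‖G‖_{S_p}^p ≤ 2^{-p} n^{1+p/2} + n^p. -/

import Mathlib

open Finset

/-- Singular values (unsorted) of a complex matrix: square roots of eigenvalues of `A * Aᴴ`. -/
noncomputable def svalC {m n : ℕ} (A : Matrix (Fin m) (Fin n) ℂ) : Fin m → ℝ :=
  fun i => Real.sqrt ((Matrix.isHermitian_mul_conjTranspose_self A).eigenvalues i)

/-- Singular values of a complex matrix sorted in decreasing order. -/
noncomputable def svalCSorted {m n : ℕ} (A : Matrix (Fin m) (Fin n) ℂ) : Fin m → ℝ :=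
  svalC A ∘ ⇑(Tuple.sort (fun i => -(svalC A i)))

/-- Singular values (unsorted) of a real matrix. -/
noncomputable def svalR {m n : ℕ} (A : Matrix (Fin m) (Fin n) ℝ) : Fin m → ℝ :=
  fun i => Real.sqrt ((Matrix.isHermitian_mul_conjTranspose_self A).eigenvalues i)

/-- Singular values of a real matrix sorted in decreasing order. -/
noncomputable def svalRSorted {m n : ℕ} (A : Matrix (Fin m) (Fin n) ℝ) : Fin m → ℝ :=
  svalR A ∘ ⇑(Tuple.sort (fun i => -(svalR A i)))

/-- Ky Fan `k`-norm of a complex matrix: the sum of its `k` largest singular values. -/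
noncomputable def kyFanC {m n : ℕ} (A : Matrix (Fin m) (Fin n) ℂ) (k : ℕ) : ℝ :=
  ∑ i : Fin m, if (i : ℕ) < k then svalCSorted A i else 0

/-- Ky Fan `k`-norm of a real matrix. -/
noncomputable def kyFanR {m n : ℕ} (A : Matrix (Fin m) (Fin n) ℝ) (k : ℕ) : ℝ :=
  ∑ i : Fin m, if (i : ℕ) < k then svalRSorted A i else 0

/-- The adjacency matrix of a simple graph is Hermitian (over `ℝ`). -/
lemma adjHerm {n : ℕ} (G : SimpleGraph (Fin n)) [DecidableRel G.Adj] :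
    (G.adjMatrix ℝ).IsHermitian := by
  have h := G.isSymm_adjMatrix (α := ℝ)
  first
  | (unfold Matrix.IsHermitian; rw [Matrix.conjTranspose_eq_transpose_of_trivial]; exact h)
  | simpa [Matrix.IsHermitian, Matrix.conjTranspose, Matrix.IsSymm, Matrix.transpose, Matrix.map, star_trivial] using h

/-- Singular values of a graph (unsorted). -/
noncomputable def gsval {n : ℕ} (G : SimpleGraph (Fin n)) [DecidableRel G.Adj] : Fin n → ℝ :=
  svalR (G.adjMatrix ℝ)

/-- Singular values of a graph sorted in decreasing order. -/
noncomputable def gsvalSorted {n : ℕ} (G : SimpleGraph (Fin n)) [DecidableRel G.Adj] : Fin n → ℝ :=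
  svalRSorted (G.adjMatrix ℝ)

/-- Eigenvalues of a graph sorted in decreasing order: `geigSorted G 0 = μ₁ ≥ ⋯ ≥ μₙ`. -/
noncomputable def geigSorted {n : ℕ} (G : SimpleGraph (Fin n)) [DecidableRel G.Adj] : Fin n → ℝ :=
  (adjHerm G).eigenvalues ∘ ⇑(Tuple.sort (fun i => -((adjHerm G).eigenvalues i)))

/-- Ky Fan `k`-norm of a graph. -/
noncomputable def kyFanG {n : ℕ} (G : SimpleGraph (Fin n)) [DecidableRel G.Adj] (k : ℕ) : ℝ :=
  kyFanR (G.adjMatrix ℝ) k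

section AuxLemmas

open Finset Matrix

/-- Trace of a real symmetric matrix equals the sum of its eigenvalues. -/
lemma trace_eq_sum_eig {n : ℕ} (B : Matrix (Fin n) (Fin n) ℝ) (hB : B.IsHermitian) :
    B.trace = ∑ i, hB.eigenvalues i := by
  conv_lhs => rw [hB.spectral_theorem, Unitary.conjStarAlgAut_apply]
  rw [Matrix.trace_mul_cycle]
  simp [Matrix.trace_diagonal]

lemma rayleigh_decomp {n : ℕ} (B : Matrix (Fin n) (Fin n) ℝ) (hB : B.IsHermitian)
    (x : Fin n → ℝ) :
    x ⬝ᵥ (B *ᵥ x) = ∑ i, hB.eigenvalues i *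
      ((star (hB.eigenvectorUnitary : Matrix (Fin n) (Fin n) ℝ) *ᵥ x) i) ^ 2 := by
  set U := (hB.eigenvectorUnitary : Matrix (Fin n) (Fin n) ℝ) with hU
  have hstar : star U = Uᵀ := by
    rw [Matrix.star_eq_conjTranspose, Matrix.conjTranspose_eq_transpose_of_trivial]
  conv_lhs => rw [hB.spectral_theorem, Unitary.conjStarAlgAut_apply, ← mulVec_mulVec, ← mulVec_mulVec,
    dotProduct_mulVec, ← mulVec_transpose]
  rw [← hstar]
  simp [mulVec_diagonal, dotProduct, mul_comm, mul_assoc, sq, mul_left_comm, ← hU]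

lemma rayleigh_norm {n : ℕ} (B : Matrix (Fin n) (Fin n) ℝ) (hB : B.IsHermitian)
    (x : Fin n → ℝ) :
    (star (hB.eigenvectorUnitary : Matrix (Fin n) (Fin n) ℝ) *ᵥ x) ⬝ᵥ
      (star (hB.eigenvectorUnitary : Matrix (Fin n) (Fin n) ℝ) *ᵥ x) = x ⬝ᵥ x := by
  set U := (hB.eigenvectorUnitary : Matrix (Fin n) (Fin n) ℝ) with hU
  have h1 : U * star U = 1 := (Matrix.mem_unitaryGroup_iff).mp hB.eigenvectorUnitary.2
  have hstar : star U = Uᵀ := by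
    rw [Matrix.star_eq_conjTranspose, Matrix.conjTranspose_eq_transpose_of_trivial]
  rw [dotProduct_mulVec, ← mulVec_transpose, hstar, transpose_transpose, ← hstar,
    mulVec_mulVec, h1, one_mulVec]

/-- Rayleigh bound: some eigenvalue satisfies `xᵀBx ≤ λ⬝‖x‖²`. -/
lemma rayleigh_exists {n : ℕ} (hn : 0 < n) (B : Matrix (Fin n) (Fin n) ℝ)
    (hB : B.IsHermitian) (x : Fin n → ℝ) :
    ∃ j, x ⬝ᵥ (B *ᵥ x) ≤ hB.eigenvalues j * (x ⬝ᵥ x) := by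
  obtain ⟨j, -, hj⟩ := Finset.exists_max_image Finset.univ hB.eigenvalues
    ⟨⟨0, hn⟩, Finset.mem_univ _⟩
  refine ⟨j, ?_⟩
  set y := star (hB.eigenvectorUnitary : Matrix (Fin n) (Fin n) ℝ) *ᵥ x with hy
  have h2 : x ⬝ᵥ x = ∑ i, (y i) ^ 2 := by
    rw [← rayleigh_norm B hB x]
    simp [dotProduct, sq, hy]
  rw [rayleigh_decomp B hB x, h2, Finset.mul_sum]
  exact Finset.sum_le_sum fun i _ =>
    mul_le_mul_of_nonneg_right (hj i (Finset.mem_univ i)) (sq_nonneg _)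

end AuxLemmas

open Matrix

/-- For `1 ≤ p < 2` and any graph of order `n`, `‖G‖_{S_p}^p ≤ 2^{-p} n^{1+p/2} + n^p`. -/
theorem schatten_le_absolute {n : ℕ} (G : SimpleGraph (Fin n)) [DecidableRel G.Adj]
    (p : ℝ) (hp1 : 1 ≤ p) (hp2 : p < 2) :
    ∑ i, gsval G i ^ p ≤ (2 : ℝ) ^ (-p) * (n : ℝ) ^ (1 + p / 2) + (n : ℝ) ^ p := by
  have hp0 : 0 < p := lt_of_lt_of_le one_pos hp1
  rcases Nat.eq_zero_or_pos n with hn | hn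
  · subst hn
    simp only [Finset.univ_eq_empty, Finset.sum_empty, Nat.cast_zero]
    positivity
  have hnR : (0:ℝ) < n := by exact_mod_cast hn
  set A := G.adjMatrix ℝ with hA
  set hB := Matrix.isHermitian_mul_conjTranspose_self A with hhB
  set lam := hB.eigenvalues with hlam
  have hlam0 : ∀ i, 0 ≤ lam i := fun i =>
    Matrix.eigenvalues_self_mul_conjTranspose_nonneg A i
  set T := Matrix.trace (A * Aᴴ) with hT
  have hTsum : T = ∑ i, lam i := trace_eq_sum_eig _ hB
  set d : Fin n → ℝ := fun k => ∑ v, A v k with hd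
  have hA0 : ∀ v k, 0 ≤ A v k := by
    intro v k; by_cases h : G.Adj v k <;> simp [hA, h]
  have hA1 : ∀ v k, A v k ≤ 1 := by
    intro v k; by_cases h : G.Adj v k <;> simp [hA, h]
  have hidem : ∀ v k, A v k * A v k = A v k := by
    intro v k; by_cases h : G.Adj v k <;> simp [hA, h]
  have hTd : T = ∑ k, d k := by
    rw [hT]
    simp only [Matrix.trace, Matrix.diag, Matrix.mul_apply, Matrix.conjTranspose_apply,
      star_trivial]
    rw [Finset.sum_comm]
    exact Finset.sum_congr rfl fun k _ => Finset.sum_congr rfl fun v _ => hidem v k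
  have hB11 : (fun _ => (1:ℝ)) ⬝ᵥ ((A * Aᴴ) *ᵥ fun _ => 1) = ∑ k, d k ^ 2 := by
    simp only [dotProduct, Matrix.mulVec, Matrix.mul_apply,
      Matrix.conjTranspose_apply, star_trivial, one_mul, mul_one]
    calc ∑ v, ∑ w, ∑ k, A v k * A w k
        = ∑ v, ∑ k, ∑ w, A v k * A w k := by
          exact Finset.sum_congr rfl fun v _ => Finset.sum_comm
      _ = ∑ v, ∑ k, A v k * d k := by
          simp only [← Finset.mul_sum, hd]
      _ = ∑ k, ∑ v, A v k * d k := Finset.sum_comm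
      _ = ∑ k, d k ^ 2 := by
          simp only [← Finset.sum_mul, sq, hd]
  have hCS : T ^ 2 ≤ (n:ℝ) * ∑ k, d k ^ 2 := by
    have h := sq_sum_le_card_mul_sum_sq (s := Finset.univ) (f := d)
    rw [hTd]
    simpa [Finset.card_univ] using h
  obtain ⟨j, hj⟩ := rayleigh_exists hn (A * Aᴴ) hB (fun _ => (1:ℝ))
  have hxx : (fun _ : Fin n => (1:ℝ)) ⬝ᵥ (fun _ : Fin n => (1:ℝ)) = (n:ℝ) := by
    simp [dotProduct]
  rw [hB11, hxx] at hj
  have hkey : T ^ 2 ≤ (n:ℝ) ^ 2 * lam j := by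
    calc T ^ 2 ≤ (n:ℝ) * ∑ k, d k ^ 2 := hCS
      _ ≤ (n:ℝ) * (lam j * n) := by
          exact mul_le_mul_of_nonneg_left hj (le_of_lt hnR)
      _ = (n:ℝ) ^ 2 * lam j := by ring
  have hTn2 : T ≤ (n:ℝ) ^ 2 := by
    rw [hTd]
    calc ∑ k, d k ≤ ∑ _k : Fin n, (n:ℝ) := by
          refine Finset.sum_le_sum fun k _ => ?_
          calc d k ≤ ∑ _v : Fin n, (1:ℝ) := Finset.sum_le_sum fun v _ => hA1 v k
            _ = (n:ℝ) := by simp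
      _ = (n:ℝ) * n := by simp [mul_comm]
      _ = (n:ℝ) ^ 2 := by ring
  have hlamjT : lam j ≤ T := by
    rw [hTsum]
    exact Finset.single_le_sum (fun i _ => hlam0 i) (Finset.mem_univ j)
  have hlamjn : lam j ≤ (n:ℝ) ^ 2 := le_trans hlamjT hTn2
  -- rewrite LHS in terms of eigenvalues
  have hgs : ∀ i, gsval G i ^ p = lam i ^ (p/2) := by
    intro i
    have h1 : gsval G i = Real.sqrt (lam i) := rfl
    rw [h1, Real.sqrt_eq_rpow, ← Real.rpow_mul (hlam0 i)]
    congr 1; ring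
  set g : Fin n → ℝ := fun i => if i = j then 0 else lam i with hg
  have hg0 : ∀ i, 0 ≤ g i := fun i => by
    by_cases h : i = j <;> simp [hg, h, hlam0 _]
  have hsplit : ∑ i, lam i ^ (p/2) = lam j ^ (p/2) + ∑ i, g i ^ (p/2) := by
    rw [← Finset.sum_erase_add Finset.univ _ (Finset.mem_univ j), add_comm]
    congr 1
    rw [← Finset.sum_erase_add Finset.univ (fun i => g i ^ (p/2)) (Finset.mem_univ j)]
    have hgj : g j ^ (p/2) = 0 := by
      simp [hg, Real.zero_rpow (by positivity : p/2 ≠ 0)]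
    rw [hgj, add_zero]
    exact Finset.sum_congr rfl fun i hi => by
      simp [hg, (Finset.mem_erase.mp hi).1]
  have hSg : ∑ i, g i = T - lam j := by
    rw [← Finset.sum_erase_add Finset.univ g (Finset.mem_univ j)]
    have hgj : g j = 0 := by simp [hg]
    rw [hgj, add_zero]
    have : ∑ i ∈ Finset.univ.erase j, g i = ∑ i ∈ Finset.univ.erase j, lam i :=
      Finset.sum_congr rfl fun i hi => by simp [hg, (Finset.mem_erase.mp hi).1]
    rw [this, Finset.sum_erase_eq_sub (Finset.mem_univ j), hTsum]
  have hn2 : (0:ℝ) < (n:ℝ) ^ 2 := by positivity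
  have hSgle : ∑ i, g i ≤ (n:ℝ) ^ 2 / 4 := by
    rw [hSg]
    nlinarith [hkey, sq_nonneg ((n:ℝ) ^ 2 - 2 * T), hn2]
  -- Jensen step
  have hq : (1:ℝ) ≤ 2 / p := by
    rw [le_div_iff₀ hp0]; linarith
  have hJ : ∑ i, g i ^ (p/2) ≤ (n:ℝ) * (((n:ℝ)⁻¹) * ∑ i, g i) ^ (p/2) := by
    have hw : ∀ i ∈ Finset.univ (α := Fin n), (0:ℝ) ≤ (n:ℝ)⁻¹ := fun i _ => by positivity
    have hw' : ∑ _i : Fin n, (n:ℝ)⁻¹ = 1 := by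
      rw [Finset.sum_const, Finset.card_univ, Fintype.card_fin, nsmul_eq_mul]
      field_simp
    have hz : ∀ i ∈ Finset.univ (α := Fin n), 0 ≤ g i ^ (p/2) := fun i _ =>
      Real.rpow_nonneg (hg0 i) _
    have h := Real.arith_mean_le_rpow_mean Finset.univ (fun _ => (n:ℝ)⁻¹)
      (fun i => g i ^ (p/2)) hw hw' hz hq
    have hgp : ∀ i : Fin n, (g i ^ (p/2)) ^ (2/p) = g i := by
      intro i
      rw [← Real.rpow_mul (hg0 i)]
      have : p / 2 * (2 / p) = 1 := by field_simp
      rw [this, Real.rpow_one]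
    simp only [hgp, one_div_div] at h
    rw [← Finset.mul_sum, ← Finset.mul_sum] at h
    calc ∑ i, g i ^ (p/2) = (n:ℝ) * ((n:ℝ)⁻¹ * ∑ i, g i ^ (p/2)) := by
          field_simp
      _ ≤ (n:ℝ) * (((n:ℝ)⁻¹) * ∑ i, g i) ^ (p/2) :=
          mul_le_mul_of_nonneg_left h (le_of_lt hnR)
  have hmono : (((n:ℝ)⁻¹) * ∑ i, g i) ^ (p/2) ≤ ((n:ℝ) / 4) ^ (p/2) := by
    have h1 : ((n:ℝ)⁻¹) * ∑ i, g i ≤ (n:ℝ) / 4 := by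
      have : ((n:ℝ)⁻¹) * ∑ i, g i ≤ ((n:ℝ)⁻¹) * ((n:ℝ) ^ 2 / 4) :=
        mul_le_mul_of_nonneg_left hSgle (by positivity)
      calc ((n:ℝ)⁻¹) * ∑ i, g i ≤ ((n:ℝ)⁻¹) * ((n:ℝ) ^ 2 / 4) := this
        _ = (n:ℝ) / 4 := by field_simp
    exact Real.rpow_le_rpow
      (mul_nonneg (by positivity) (Finset.sum_nonneg fun i _ => hg0 i)) h1 (by positivity)
  have h2half : (4:ℝ) ^ ((1:ℝ)/2) = 2 := by
    rw [← Real.sqrt_eq_rpow, show (4:ℝ) = 2 ^ 2 by norm_num,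
      Real.sqrt_sq (by norm_num : (0:ℝ) ≤ 2)]
  have h42 : (4:ℝ) ^ (p/2) = 2 ^ p := by
    rw [show p / 2 = 1 / 2 * p by ring, Real.rpow_mul (by norm_num : (0:ℝ) ≤ 4), h2half]
  have hfin : (n:ℝ) * ((n:ℝ) / 4) ^ (p/2) = 2 ^ (-p) * (n:ℝ) ^ (1 + p/2) := by
    rw [Real.div_rpow (le_of_lt hnR) (by norm_num : (0:ℝ) ≤ 4), h42,
      Real.rpow_add hnR 1 (p/2), Real.rpow_one,
      Real.rpow_neg (by norm_num : (0:ℝ) ≤ 2)]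
    field_simp
  have hlamp : lam j ^ (p/2) ≤ (n:ℝ) ^ p := by
    have h1 : lam j ^ (p/2) ≤ ((n:ℝ) ^ 2) ^ (p/2) :=
      Real.rpow_le_rpow (hlam0 j) hlamjn (by positivity)
    have h2 : (((n:ℝ)) ^ 2) ^ (p/2) = (n:ℝ) ^ p := by
      rw [← Real.rpow_natCast (n:ℝ) 2, ← Real.rpow_mul (le_of_lt hnR)]
      congr 1
      push_cast
      ring
    rw [h2] at h1; exact h1
  calc ∑ i, gsval G i ^ p = ∑ i, lam i ^ (p/2) :=
        Finset.sum_congr rfl fun i _ => hgs i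
    _ = lam j ^ (p/2) + ∑ i, g i ^ (p/2) := hsplit
    _ ≤ (n:ℝ) ^ p + (n:ℝ) * ((n:ℝ) / 4) ^ (p/2) := by
        refine add_le_add hlamp (hJ.trans ?_)
        exact mul_le_mul_of_nonneg_left hmono (le_of_lt hnR)
    _ = (2:ℝ) ^ (-p) * (n:ℝ) ^ (1 + p/2) + (n:ℝ) ^ p := by
        rw [hfin]; ring
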